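/- arXiv:1703.08940 — 6 statements merged into one kernel-verified Lean document; each statement's English description precedes it below -/
import Mathlib

section
/- For every 1 ≤ j ≤ i ≤ n and every 1 ≤ k ≤ n, the set R = {(b'_k, d'_k), (b_{k+1}, c'_j), (a'_i, d_{k+1})} ∪ {(a_{i−t}, c_{j−t}) : 0 ≤ t ≤ j−2} ∪ {(a_{i−j+1}, c_1)} is an admissible matching of the hard instance, and its total cost equals −3M² + w(i,k) + w(k,j) + w(i,j). -/
/-- A node of a caterpillar: `(false, a)` is the spine node of index `a`,
and `(true, a)` is the leaf of index `a`. -/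
abbrev CatNode : Type := Bool × ℕ

/-- Proper-ancestor relation in a caterpillar: the spine node of index `a` is a strict
ancestor of the spine node of index `b` iff `a < b`, and an ancestor of the leaf of
index `b` iff `a ≤ b`; leaves have no proper descendants. -/
def Anc (u v : CatNode) : Prop :=
  u.1 = false ∧ ((v.1 = false ∧ u.2 < v.2) ∨ (v.1 = true ∧ u.2 ≤ v.2))

/-- Preorder position in the left caterpillar with `n` spine nodes:
the preorder is `f_1, …, f_n, f'_n, f'_{n-1}, …, f'_1`. -/
def posF (n : ℕ) (u : CatNode) : ℕ := if u.1 then 2 * n + 1 - u.2 else u.2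

/-- Preorder position in the right caterpillar: the preorder is `g_1, g'_1, g_2, g'_2, …`. -/
def posG (u : CatNode) : ℕ := if u.1 then 2 * u.2 else 2 * u.2 - 1

/-- A valid matching between the left caterpillar with `n` spine nodes and the right
caterpillar with `m` spine nodes. -/
def ValidMatching (n m : ℕ) (R : Finset (CatNode × CatNode)) : Prop :=
  (∀ p ∈ R, 1 ≤ p.1.2 ∧ p.1.2 ≤ n ∧ 1 ≤ p.2.2 ∧ p.2.2 ≤ m) ∧
  (∀ p ∈ R, ∀ q ∈ R, p ≠ q → p.1 ≠ q.1 ∧ p.2 ≠ q.2) ∧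
  (∀ p ∈ R, ∀ q ∈ R, (Anc p.1 q.1 ↔ Anc p.2 q.2)) ∧
  (∀ p ∈ R, ∀ q ∈ R, (posF n p.1 < posF n q.1 ↔ posG p.2 < posG q.2))

/- Hard instance: the left tree `F` is the left caterpillar with `2n+1` spine nodes
`a_1, …, a_n, b_1, …, b_{n+1}` (so `a_t` is the spine node of index `t` and `b_t` the spine
node of index `n + t`), with leaves `a'_t = (true, t)` and `b'_t = (true, n + t)`.
The right tree `G` is the right caterpillar with `2n+1` spine nodes
`c_1, …, c_n, d_1, …, d_{n+1}` and leaves `c'_t, d'_t`, indexed in the same way. -/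

/-- The allowed pairs of the hard instance: `(b'_k, d'_k)` for `1 ≤ k ≤ n`;
`(b_{k+1}, c'_j)` for `1 ≤ k, j ≤ n`; `(a'_i, d_{k+1})` for `1 ≤ i, k ≤ n`;
and `(a_i, c_j)` for `1 ≤ i, j ≤ n`. -/
def Allowed (n : ℕ) (p : CatNode × CatNode) : Prop :=
  (∃ k, 1 ≤ k ∧ k ≤ n ∧ p = ((true, n + k), (true, n + k))) ∨
  (∃ k j, 1 ≤ k ∧ k ≤ n ∧ 1 ≤ j ∧ j ≤ n ∧ p = ((false, n + k + 1), (true, j))) ∨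
  (∃ i k, 1 ≤ i ∧ i ≤ n ∧ 1 ≤ k ∧ k ≤ n ∧ p = ((true, i), (false, n + k + 1))) ∨
  (∃ i j, 1 ≤ i ∧ i ≤ n ∧ 1 ≤ j ∧ j ≤ n ∧ p = ((false, i), (false, j)))

/-- The cost of an allowed pair of the hard instance:
`cost (b'_k, d'_k) = -M² - 2Mk`, `cost (b_{k+1}, c'_j) = -M² + Mk + Mj + w k j`,
`cost (a'_i, d_{k+1}) = -M² + Mk + Mi + w i k`,
`cost (a_i, c_j) = -2M + w i j - w (i-1) (j-1)` for `2 ≤ i, j`,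
`cost (a_i, c_1) = -M(i+1) + w i 1` and `cost (a_1, c_j) = -M(j+1) + w 1 j`. -/
def cost (n : ℕ) (w : ℕ → ℕ → ℤ) (M : ℤ) : CatNode × CatNode → ℤ
  | ((true, x), (true, _)) => -M ^ 2 - 2 * M * ((x - n : ℕ) : ℤ)
  | ((false, x), (true, j)) =>
      -M ^ 2 + M * ((x - (n + 1) : ℕ) : ℤ) + M * (j : ℤ) + w (x - (n + 1)) j
  | ((true, i), (false, y)) =>
      -M ^ 2 + M * ((y - (n + 1) : ℕ) : ℤ) + M * (i : ℤ) + w i (y - (n + 1))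
  | ((false, i), (false, j)) =>
      if j = 1 then -(M * ((i : ℤ) + 1)) + w i 1
      else if i = 1 then -(M * ((j : ℤ) + 1)) + w 1 j
      else -2 * M + w i j - w (i - 1) (j - 1)

/-- An admissible matching of the hard instance: a valid matching between the two
caterpillars with `2n+1` spine nodes each, all of whose pairs are allowed pairs. -/
def Admissible (n : ℕ) (R : Finset (CatNode × CatNode)) : Prop :=
  ValidMatching (2 * n + 1) (2 * n + 1) R ∧ ∀ p ∈ R, Allowed n p

theorem stmt2aux (n : ℕ) (hn : 1 ≤ n) (w : ℕ → ℕ → ℤ)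
    (M : ℤ) (i j k : ℕ) (hj1 : 1 ≤ j) (hji : j ≤ i) (hin : i ≤ n)
    (hk1 : 1 ≤ k) (hkn : k ≤ n) :
    Admissible n
      (({(((true, n + k) : CatNode), ((true, n + k) : CatNode)),
        (((false, n + k + 1) : CatNode), ((true, j) : CatNode)),
        (((true, i) : CatNode), ((false, n + k + 1) : CatNode))} :
          Finset (CatNode × CatNode))
      ∪ (Finset.range (j - 1)).image
          (fun t => (((false, i - t) : CatNode), ((false, j - t) : CatNode)))
      ∪ {(((false, i - j + 1) : CatNode), ((false, 1) : CatNode))}) ∧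
      ∑ p ∈ (({(((true, n + k) : CatNode), ((true, n + k) : CatNode)),
        (((false, n + k + 1) : CatNode), ((true, j) : CatNode)),
        (((true, i) : CatNode), ((false, n + k + 1) : CatNode))} :
          Finset (CatNode × CatNode))
      ∪ (Finset.range (j - 1)).image
          (fun t => (((false, i - t) : CatNode), ((false, j - t) : CatNode)))
      ∪ {(((false, i - j + 1) : CatNode), ((false, 1) : CatNode))}), cost n w M p
        = -3 * M ^ 2 + (w i k + w k j + w i j) := by
  set R : Finset (CatNode × CatNode) :=
      ({(((true, n + k) : CatNode), ((true, n + k) : CatNode)),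
        (((false, n + k + 1) : CatNode), ((true, j) : CatNode)),
        (((true, i) : CatNode), ((false, n + k + 1) : CatNode))} :
          Finset (CatNode × CatNode))
      ∪ (Finset.range (j - 1)).image
          (fun t => (((false, i - t) : CatNode), ((false, j - t) : CatNode)))
      ∪ {(((false, i - j + 1) : CatNode), ((false, 1) : CatNode))} with hR
  have memR : ∀ p : CatNode × CatNode, p ∈ R ↔
      (p = (((true, n + k) : CatNode), ((true, n + k) : CatNode)) ∨
       p = (((false, n + k + 1) : CatNode), ((true, j) : CatNode)) ∨
       p = (((true, i) : CatNode), ((false, n + k + 1) : CatNode)) ∨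
       ∃ t < j, p = (((false, i - t) : CatNode), ((false, j - t) : CatNode))) := by
    intro p
    simp only [hR, Finset.mem_union, Finset.mem_insert, Finset.mem_singleton,
      Finset.mem_image, Finset.mem_range]
    constructor
    · rintro (((h | h | h) | ⟨t, ht, h⟩) | h)
      · exact Or.inl h
      · exact Or.inr (Or.inl h)
      · exact Or.inr (Or.inr (Or.inl h))
      · exact Or.inr (Or.inr (Or.inr ⟨t, by omega, h.symm⟩))
      · refine Or.inr (Or.inr (Or.inr ⟨j - 1, by omega, ?_⟩))
        rw [h]; simp [Prod.ext_iff]; omega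
    · rintro (h | h | h | ⟨t, ht, h⟩)
      · exact Or.inl (Or.inl (Or.inl h))
      · exact Or.inl (Or.inl (Or.inr (Or.inl h)))
      · exact Or.inl (Or.inl (Or.inr (Or.inr h)))
      · by_cases htj : t < j - 1
        · exact Or.inl (Or.inr ⟨t, htj, h.symm⟩)
        · right; rw [h]; simp [Prod.ext_iff]; omega
  refine ⟨⟨⟨?_, ?_, ?_, ?_⟩, ?_⟩, ?_⟩
  · intro p hp
    rcases (memR p).1 hp with h | h | h | ⟨t, ht, h⟩ <;> subst h <;> simp <;> omega
  · intro p hp q hq hne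
    rcases (memR p).1 hp with h | h | h | ⟨t, ht, h⟩ <;> subst h <;>
      rcases (memR q).1 hq with h | h | h | ⟨s, hs, h⟩ <;> subst h <;>
      constructor <;> (try simp [Prod.ext_iff] at hne) <;> simp [Prod.ext_iff] <;> omega
  · intro p hp q hq
    rcases (memR p).1 hp with h | h | h | ⟨t, ht, h⟩ <;> subst h <;>
      rcases (memR q).1 hq with h | h | h | ⟨s, hs, h⟩ <;> subst h <;>
      simp [Anc] <;> omega
  · intro p hp q hq
    rcases (memR p).1 hp with h | h | h | ⟨t, ht, h⟩ <;> subst h <;>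
      rcases (memR q).1 hq with h | h | h | ⟨s, hs, h⟩ <;> subst h <;>
      simp [posF, posG] <;> omega
  · intro p hp
    rcases (memR p).1 hp with h | h | h | ⟨t, ht, h⟩ <;> subst h
    · exact Or.inl ⟨k, hk1, hkn, rfl⟩
    · exact Or.inr (Or.inl ⟨k, j, hk1, hkn, hj1, by omega, rfl⟩)
    · exact Or.inr (Or.inr (Or.inl ⟨i, k, by omega, hin, hk1, hkn, rfl⟩))
    · exact Or.inr (Or.inr (Or.inr ⟨i - t, j - t, by omega, by omega, by omega, by omega, rfl⟩))
  · have hQinj : ∀ t ∈ Finset.range (j - 1), ∀ s ∈ Finset.range (j - 1),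
        (((false, i - t) : CatNode), ((false, j - t) : CatNode)) =
        (((false, i - s) : CatNode), ((false, j - s) : CatNode)) → t = s := by
      intro t ht s hs h
      simp only [Finset.mem_range] at ht hs
      simp only [Prod.ext_iff, Prod.mk.injEq] at h
      omega
    have hd1 : Disjoint
        ({(((true, n + k) : CatNode), ((true, n + k) : CatNode)),
          (((false, n + k + 1) : CatNode), ((true, j) : CatNode)),
          (((true, i) : CatNode), ((false, n + k + 1) : CatNode))} : Finset (CatNode × CatNode))
        ((Finset.range (j - 1)).image
          (fun t => (((false, i - t) : CatNode), ((false, j - t) : CatNode)))) := by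
      simp only [Finset.disjoint_left, Finset.mem_insert, Finset.mem_singleton,
        Finset.mem_image, Finset.mem_range]
      rintro p (h | h | h) ⟨t, ht, h'⟩ <;> rw [← h'] at h <;>
        simp [Prod.ext_iff] at h <;> omega
    have hd2 : Disjoint
        (({(((true, n + k) : CatNode), ((true, n + k) : CatNode)),
          (((false, n + k + 1) : CatNode), ((true, j) : CatNode)),
          (((true, i) : CatNode), ((false, n + k + 1) : CatNode))} : Finset (CatNode × CatNode))
          ∪ (Finset.range (j - 1)).image
            (fun t => (((false, i - t) : CatNode), ((false, j - t) : CatNode))))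
        ({(((false, i - j + 1) : CatNode), ((false, 1) : CatNode))} : Finset (CatNode × CatNode)) := by
      simp only [Finset.disjoint_right, Finset.mem_singleton, Finset.mem_union,
        Finset.mem_insert, Finset.mem_image, Finset.mem_range]
      rintro p rfl
      rintro ((h | h | h) | ⟨t, ht, h⟩) <;> simp [Prod.ext_iff] at h <;> omega
    have c1 : cost n w M (((true, n + k) : CatNode), ((true, n + k) : CatNode))
        = -M ^ 2 - 2 * M * (k : ℤ) := by
      simp [cost, Nat.add_sub_cancel_left]
    have ek : n + k + 1 - (n + 1) = k := by omega
    have c2 : cost n w M (((false, n + k + 1) : CatNode), ((true, j) : CatNode))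
        = -M ^ 2 + M * (k : ℤ) + M * (j : ℤ) + w k j := by
      simp [cost, ek]
    have c3 : cost n w M (((true, i) : CatNode), ((false, n + k + 1) : CatNode))
        = -M ^ 2 + M * (k : ℤ) + M * (i : ℤ) + w i k := by
      simp [cost, ek]
    have c4 : cost n w M (((false, i - j + 1) : CatNode), ((false, 1) : CatNode))
        = -(M * (((i - j + 1 : ℕ) : ℤ) + 1)) + w (i - j + 1) 1 := by
      simp [cost]
    have cQ : ∀ t ∈ Finset.range (j - 1),
        cost n w M (((false, i - t) : CatNode), ((false, j - t) : CatNode))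
          = -2 * M + (w (i - t) (j - t) - w (i - (t + 1)) (j - (t + 1))) := by
      intro t ht
      simp only [Finset.mem_range] at ht
      have h1 : j - t ≠ 1 := by omega
      have h2 : i - t ≠ 1 := by omega
      have h3 : i - t - 1 = i - (t + 1) := by omega
      have h4 : j - t - 1 = j - (t + 1) := by omega
      simp only [cost, if_neg h1, if_neg h2, h3, h4]
      ring
    have himg : ∑ p ∈ (Finset.range (j - 1)).image
          (fun t => (((false, i - t) : CatNode), ((false, j - t) : CatNode))), cost n w M p
        = ((j - 1 : ℕ) : ℤ) * (-2 * M) + (w i j - w (i - j + 1) 1) := by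
      rw [Finset.sum_image hQinj, Finset.sum_congr rfl cQ, Finset.sum_add_distrib,
        Finset.sum_const, Finset.card_range]
      have tele := Finset.sum_range_sub' (fun t => w (i - t) (j - t)) (j - 1)
      rw [tele]
      have e1 : i - (j - 1) = i - j + 1 := by omega
      have e2 : j - (j - 1) = 1 := by omega
      have e3 : i - 0 = i := rfl
      have e4 : j - 0 = j := rfl
      rw [e1, e2, e3, e4, nsmul_eq_mul]
    rw [hR, Finset.sum_union hd2, Finset.sum_union hd1, himg, Finset.sum_singleton, c4,
      Finset.sum_insert (by simp [Prod.ext_iff]), Finset.sum_insert (by simp [Prod.ext_iff]),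
      Finset.sum_singleton, c1, c2, c3]
    have hc1 : ((j - 1 : ℕ) : ℤ) = (j : ℤ) - 1 := by omega
    have hc2 : ((i - j + 1 : ℕ) : ℤ) = (i : ℤ) - (j : ℤ) + 1 := by omega
    rw [hc1, hc2]
    ring

/-- The explicit matching `{(b'_k, d'_k), (b_{k+1}, c'_j), (a'_i, d_{k+1})}
∪ {(a_{i-t}, c_{j-t}) : 0 ≤ t ≤ j-2} ∪ {(a_{i-j+1}, c_1)}` is an admissible matching of the
hard instance, of total cost `-3M² + w(i,k) + w(k,j) + w(i,j)`. -/
theorem stmt2 (n : ℕ) (hn : 1 ≤ n) (w : ℕ → ℕ → ℤ)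
    (hsym : ∀ i j, 1 ≤ i → i ≤ n → 1 ≤ j → j ≤ n → w i j = w j i)
    (M : ℤ) (i j k : ℕ) (hj1 : 1 ≤ j) (hji : j ≤ i) (hin : i ≤ n)
    (hk1 : 1 ≤ k) (hkn : k ≤ n) :
    let R : Finset (CatNode × CatNode) :=
      ({(((true, n + k) : CatNode), ((true, n + k) : CatNode)),
        (((false, n + k + 1) : CatNode), ((true, j) : CatNode)),
        (((true, i) : CatNode), ((false, n + k + 1) : CatNode))} :
          Finset (CatNode × CatNode))
      ∪ (Finset.range (j - 1)).image
          (fun t => (((false, i - t) : CatNode), ((false, j - t) : CatNode)))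
      ∪ {(((false, i - j + 1) : CatNode), ((false, 1) : CatNode))}
    Admissible n R ∧
      ∑ p ∈ R, cost n w M p = -3 * M ^ 2 + (w i k + w k j + w i j) := by
  intro R
  exact stmt2aux n hn w M i j k hj1 hji hin hk1 hkn
end

section
/- Let n ≥ 2 and m ≥ 1 be integers, and for every integer t ≥ 1 let ν(t) denote the largest integer e ≥ 0 such that n^e divides t. Then the maximum, over all integers r ≥ 0 and all sequences of integers m ≥ t_1 > t_2 > ⋯ > t_r ≥ 1 satisfying ν(t_1) ≤ ν(t_2) ≤ ⋯ ≤ ν(t_r) and such that for every e the number of indices i with ν(t_i) = e is at most n−1, of the sum Σ_{i=1}^{r} n^{ν(t_i)}, equals m. -/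
/-- `nu n t` is the largest integer `e ≥ 0` such that `n ^ e` divides `t`
(for `n ≥ 2` and `t ≥ 1`). -/
noncomputable def nu (n t : ℕ) : ℕ := sSup {e : ℕ | n ^ e ∣ t}

lemma nu_spec {n t : ℕ} (hn : 2 ≤ n) (ht : 1 ≤ t) :
    n ^ nu n t ∣ t ∧ ∀ e, n ^ e ∣ t → e ≤ nu n t := by
  have hbdd : BddAbove {e : ℕ | n ^ e ∣ t} := by
    refine ⟨t, fun e he => ?_⟩
    have h1 : n ^ e ≤ t := Nat.le_of_dvd ht he
    have h2 : e < 2 ^ e := Nat.lt_two_pow_self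
    have h3 : 2 ^ e ≤ n ^ e := Nat.pow_le_pow_left hn e
    omega
  have hne : ({e : ℕ | n ^ e ∣ t}).Nonempty := ⟨0, by simp⟩
  exact ⟨Nat.sSup_mem hne hbdd, fun e he => le_csSup hbdd he⟩

lemma nu_not_dvd {n t : ℕ} (hn : 2 ≤ n) (ht : 1 ≤ t) : ¬ n ∣ t / n ^ nu n t := by
  intro h
  have hd := (nu_spec hn ht).1
  have : n ^ (nu n t + 1) ∣ t := by
    obtain ⟨c, hc⟩ := h
    obtain ⟨d, hd⟩ := hd
    have h2 : t / n ^ nu n t = d := Nat.div_eq_of_eq_mul_left (pow_pos (by omega : 0 < n) _) (hd.trans (mul_comm _ _))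
    have h3 : d = n * c := by rw [← h2, hc]
    exact ⟨c, by
      calc t = n ^ nu n t * d := hd
        _ = n ^ (nu n t + 1) * c := by rw [h3, pow_succ]; ring⟩
  have := (nu_spec hn ht).2 _ this
  omega

lemma digit_step {n m : ℕ} (hn : 2 ≤ n) (hm : 1 ≤ m) (e : ℕ) :
    m / n ^ e % n = (m - n ^ nu n m) / n ^ e % n + (if e = nu n m then 1 else 0) := by
  set e0 := nu n m with he0
  have hnpos : 0 < n := by omega
  have hd : n ^ e0 ∣ m := (nu_spec hn hm).1
  set a := m / n ^ e0 with ha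
  have hma : m = a * n ^ e0 := (Nat.div_mul_cancel hd).symm
  have hna : ¬ n ∣ a := nu_not_dvd hn hm
  have hapos : 1 ≤ a := by
    rcases Nat.eq_zero_or_pos a with h | h
    · rw [h] at hma; omega
    · exact h
  have hm' : m - n ^ e0 = (a - 1) * n ^ e0 := by
    rw [hma, Nat.sub_mul, one_mul]
  rcases lt_trichotomy e e0 with hlt | heq | hgt
  · -- e < e0 : both digits are 0
    rw [if_neg (by omega), add_zero]
    have key : ∀ b : ℕ, (b * n ^ e0) / n ^ e % n = 0 := by
      intro b
      have h1 : b * n ^ e0 = (b * n ^ (e0 - e)) * n ^ e := by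
        rw [mul_assoc, ← pow_add]
        congr 2
        omega
      rw [h1, Nat.mul_div_cancel _ (by positivity)]
      have h2 : n ∣ b * n ^ (e0 - e) :=
        Dvd.dvd.mul_left (dvd_pow_self n (by omega)) b
      exact Nat.dvd_iff_mod_eq_zero.mp h2
    rw [hm']
    conv_lhs => rw [hma]
    rw [key, key]
  · -- e = e0
    rw [if_pos heq, heq]
    have h1 : m / n ^ e0 = a := ha.symm
    have h2 : (m - n ^ e0) / n ^ e0 = a - 1 := by
      rw [hm', Nat.mul_div_cancel _ (by positivity)]
    rw [h1, h2]
    have hs : a % n ≠ 0 := fun h => hna (Nat.dvd_of_mod_eq_zero h)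
    have hq := Nat.mod_add_div a n
    have hcm : (a / n) * n = n * (a / n) := mul_comm _ _
    have h3 : a - 1 = (a % n - 1) + (a / n) * n := by omega
    have h4 : (a - 1) % n = a % n - 1 := by
      rw [h3, Nat.add_mul_mod_self_right, Nat.mod_eq_of_lt (by
        have := Nat.mod_lt a hnpos
        omega)]
    omega
  · -- e > e0 : digits agree
    rw [if_neg (by omega), add_zero]
    have hse : m % n ^ e = (a % n ^ (e - e0)) * n ^ e0 := by
      conv_lhs => rw [hma]
      have : n ^ e = n ^ (e - e0) * n ^ e0 := by rw [← pow_add]; congr 1; omega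
      rw [this, Nat.mul_mod_mul_right]
    have hamod : a % n ^ (e - e0) ≠ 0 := by
      intro h
      have h2 : n ^ (e - e0) ∣ a := Nat.dvd_of_mod_eq_zero h
      exact hna (dvd_trans (dvd_pow_self n (by omega)) h2)
    have hs1 : n ^ e0 ≤ m % n ^ e := by
      rw [hse]
      exact Nat.le_mul_of_pos_left _ (Nat.pos_of_ne_zero hamod)
    have hdm := Nat.mod_add_div m (n ^ e)
    have hlt2 : m % n ^ e < n ^ e := Nat.mod_lt _ (by positivity)
    have hcomm : m / n ^ e * n ^ e = n ^ e * (m / n ^ e) := mul_comm _ _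
    have hsucc : (m / n ^ e + 1) * n ^ e = n ^ e * (m / n ^ e) + n ^ e := by ring
    have heqdiv : (m - n ^ e0) / n ^ e = m / n ^ e := by
      apply Nat.div_eq_of_lt_le
      · omega
      · omega
    rw [heqdiv]

lemma sum_cons_seq (r' : ℕ) (m : ℕ) (t' : ℕ → ℕ) (F : ℕ → ℕ) :
    ∑ i ∈ Finset.Icc 1 (r' + 1),
        F (if i = 1 then m else t' (i - 1))
      = F m + ∑ i ∈ Finset.Icc 1 r', F (t' i) := by
  have hins : Finset.Icc 1 (r' + 1) = insert 1 (Finset.Icc 2 (r' + 1)) := by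
    ext x
    simp only [Finset.mem_Icc, Finset.mem_insert]
    omega
  rw [hins, Finset.sum_insert (by simp [Finset.mem_Icc])]
  rw [if_pos rfl]
  congr 1
  refine Finset.sum_nbij' (fun i => i - 1) (fun i => i + 1) ?_ ?_ ?_ ?_ ?_ <;>
    · intro a ha
      simp only [Finset.mem_Icc] at *
      first
        | omega
        | (rw [if_neg (by omega)])

lemma exists_seq {n : ℕ} (hn : 2 ≤ n) : ∀ m : ℕ, 1 ≤ m →
    ∃ (r : ℕ) (t : ℕ → ℕ), 1 ≤ r ∧ t 1 = m ∧
      (∀ i, 1 ≤ i → i ≤ r → 1 ≤ t i ∧ t i ≤ m) ∧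
      (∀ i, 1 ≤ i → i < r → t (i + 1) < t i) ∧
      (∀ i, 1 ≤ i → i < r → nu n (t i) ≤ nu n (t (i + 1))) ∧
      (∀ e : ℕ, ((Finset.Icc 1 r).filter fun i => nu n (t i) = e).card = m / n ^ e % n) ∧
      m = ∑ i ∈ Finset.Icc 1 r, n ^ nu n (t i) := by
  intro m
  induction m using Nat.strong_induction_on with
  | _ m IH =>
  intro hm
  have hnpos : 0 < n := by omega
  set e0 := nu n m with he0
  have hd : n ^ e0 ∣ m := (nu_spec hn hm).1
  have hple : n ^ e0 ≤ m := Nat.le_of_dvd hm hd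
  have hppos : 0 < n ^ e0 := by positivity
  -- digit identity, for all e
  have hdig : ∀ e, m / n ^ e % n
      = (m - n ^ e0) / n ^ e % n + (if e = e0 then 1 else 0) :=
    fun e => digit_step hn hm e
  rcases Nat.eq_zero_or_pos (m - n ^ e0) with hz | hpos
  · -- m = n ^ e0 : single-element sequence
    have hme : m = n ^ e0 := by omega
    refine ⟨1, fun _ => m, le_refl 1, rfl, ?_, ?_, ?_, ?_, ?_⟩
    · intro i _ _; exact ⟨hm, le_refl m⟩
    · intro i h1 h2; omega
    · intro i h1 h2; omega
    · intro e
      have : (Finset.Icc 1 1) = {1} := rfl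
      rw [this]
      rw [hdig e, hz, Nat.zero_div, Nat.zero_mod, zero_add]
      by_cases he : e = e0
      · rw [if_pos he]
        simp [Finset.filter_singleton, he, he0]
      · rw [if_neg he]
        simp only [Finset.filter_singleton, ← he0]
        rw [if_neg (by omega)]
        simp
    · rw [show (Finset.Icc 1 1) = {1} from rfl, Finset.sum_singleton, ← he0]
      exact hme
  · -- recursive case
    obtain ⟨r', t', hr', ht1, hbd, hdec, hmono, hcard, hsum⟩ :=
      IH (m - n ^ e0) (by omega) hpos
    refine ⟨r' + 1, fun i => if i = 1 then m else t' (i - 1), by omega, if_pos rfl, ?_, ?_, ?_, ?_, ?_⟩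
    · intro i h1 h2
      beta_reduce
      by_cases hi : i = 1
      · rw [if_pos hi]; exact ⟨hm, le_refl m⟩
      · rw [if_neg hi]
        have := hbd (i - 1) (by omega) (by omega)
        omega
    · intro i h1 h2
      beta_reduce
      by_cases hi : i = 1
      · subst hi
        rw [if_neg (by omega : ¬(1 + 1 = 1)), if_pos rfl]
        simp only [Nat.add_sub_cancel]
        rw [ht1]
        omega
      · rw [if_neg (by omega : ¬(i + 1 = 1)), if_neg hi]
        have := hdec (i - 1) (by omega) (by omega)
        have h3 : i - 1 + 1 = i + 1 - 1 := by omega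
        rw [h3] at this
        exact this
    · intro i h1 h2
      beta_reduce
      by_cases hi : i = 1
      · subst hi
        rw [if_pos rfl, if_neg (by omega : ¬(1 + 1 = 1))]
        simp only [Nat.add_sub_cancel, ht1]
        -- nu n m ≤ nu n (m - n ^ e0)
        have hdvd' : n ^ e0 ∣ m - n ^ e0 := Nat.dvd_sub hd dvd_rfl
        exact (nu_spec hn (by omega)).2 e0 hdvd'
      · rw [if_neg hi, if_neg (by omega : ¬(i + 1 = 1))]
        have := hmono (i - 1) (by omega) (by omega)
        have h3 : i - 1 + 1 = i + 1 - 1 := by omega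
        rw [h3] at this
        exact this
    · intro e
      beta_reduce
      have hkey := sum_cons_seq r' m t' (fun x => if nu n x = e then 1 else 0)
      have hc := hcard e
      rw [Finset.card_filter] at hc
      rw [Finset.card_filter, hkey, hc, hdig e, ← he0]
      by_cases he : e0 = e
      · rw [if_pos he, if_pos he.symm]
        omega
      · rw [if_neg he, if_neg (fun h => he h.symm)]
        omega
    · beta_reduce
      have hkey := sum_cons_seq r' m t' (fun x => n ^ nu n x)
      rw [hkey, ← hsum, ← he0]
      omega

lemma sum_le_first {n : ℕ} (hn : 2 ≤ n) (r : ℕ) (t : ℕ → ℕ)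
    (hbd : ∀ i, 1 ≤ i → i ≤ r → 1 ≤ t i)
    (hdec : ∀ i, 1 ≤ i → i < r → t (i + 1) < t i)
    (hmono : ∀ i, 1 ≤ i → i < r → nu n (t i) ≤ nu n (t (i + 1))) :
    ∀ d j, 1 ≤ j → j ≤ r → r - j = d → ∑ i ∈ Finset.Icc j r, n ^ nu n (t i) ≤ t j := by
  intro d
  induction d with
  | zero =>
    intro j h1 h2 h3
    have hj : j = r := by omega
    subst hj
    rw [Finset.Icc_self, Finset.sum_singleton]
    exact Nat.le_of_dvd (hbd j h1 h2) (nu_spec hn (hbd j h1 h2)).1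
  | succ d IHd =>
    intro j h1 h2 h3
    have hjr : j < r := by omega
    have hins : Finset.Icc j r = insert j (Finset.Icc (j + 1) r) := by
      ext x
      simp only [Finset.mem_Icc, Finset.mem_insert]
      omega
    rw [hins, Finset.sum_insert (by simp [Finset.mem_Icc])]
    have hIH : ∑ i ∈ Finset.Icc (j + 1) r, n ^ nu n (t i) ≤ t (j + 1) :=
      IHd (j + 1) (by omega) (by omega) (by omega)
    -- n ^ nu n (t j) + t (j+1) ≤ t j
    have htj : 1 ≤ t j := hbd j h1 (by omega)
    have htj1 : 1 ≤ t (j + 1) := hbd (j + 1) (by omega) (by omega)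
    have hdvd1 : n ^ nu n (t j) ∣ t j := (nu_spec hn htj).1
    have hdvd2 : n ^ nu n (t j) ∣ t (j + 1) :=
      dvd_trans (pow_dvd_pow n (hmono j h1 hjr)) (nu_spec hn htj1).1
    have hlt : t (j + 1) < t j := hdec j h1 hjr
    have hdvd3 : n ^ nu n (t j) ∣ t j - t (j + 1) := Nat.dvd_sub hdvd1 hdvd2
    have hle : n ^ nu n (t j) ≤ t j - t (j + 1) := Nat.le_of_dvd (by omega) hdvd3
    omega

/-- Combinatorial content of the `I`-gadget: the maximum, over all `r ≥ 0` and sequences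
`m ≥ t_1 > t_2 > ⋯ > t_r ≥ 1` with `ν(t_1) ≤ ν(t_2) ≤ ⋯ ≤ ν(t_r)` and such that for every
`e` at most `n - 1` indices `i` satisfy `ν(t_i) = e`, of `Σ_i n ^ ν(t_i)`, equals `m`. -/
theorem stmt7 (n m : ℕ) (hn : 2 ≤ n) (hm : 1 ≤ m) :
    IsGreatest {S : ℕ | ∃ (r : ℕ) (t : ℕ → ℕ),
        (∀ i, 1 ≤ i → i ≤ r → 1 ≤ t i ∧ t i ≤ m) ∧
        (∀ i, 1 ≤ i → i < r → t (i + 1) < t i) ∧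
        (∀ i, 1 ≤ i → i < r → nu n (t i) ≤ nu n (t (i + 1))) ∧
        (∀ e : ℕ, ((Finset.Icc 1 r).filter fun i => nu n (t i) = e).card ≤ n - 1) ∧
        S = ∑ i ∈ Finset.Icc 1 r, n ^ nu n (t i)} m := by
  constructor
  · -- m is attained
    obtain ⟨r, t, hr, ht1, hbd, hdec, hmono, hcard, hsum⟩ := exists_seq hn m hm
    exact ⟨r, t, hbd, hdec, hmono, fun e => by
      rw [hcard e]
      have := Nat.mod_lt (m / n ^ e) (show 0 < n by omega)
      omega, hsum⟩
  · -- m is an upper bound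
    rintro S ⟨r, t, hbd, hdec, hmono, -, rfl⟩
    rcases Nat.eq_zero_or_pos r with hr | hr
    · subst hr
      simp
    · calc ∑ i ∈ Finset.Icc 1 r, n ^ nu n (t i) ≤ t 1 :=
            sum_le_first hn r t (fun i h1 h2 => (hbd i h1 h2).1) hdec hmono
              (r - 1) 1 (le_refl 1) hr rfl
        _ ≤ m := (hbd 1 (le_refl 1) hr).2
end

section
/- Let k be a positive integer divisible by 3, let V be a finite set, let W₀ ≥ 1 be an integer, and let w : V × V → ℤ be symmetric with w(u,u) = 0 for all u and 1 ≤ w(u,v) ≤ W₀ for all u ≠ v. Set Λ = k²·W₀ and define w'(u,v) = w(u,v) + Λ for u ≠ v and w'(u,u) = 0. For subsets A, B ⊆ V define W'(A,B) = Σ_{{u,v} ⊆ A, u ≠ v} w'(u,v) + Σ_{(u,v) ∈ A × B} w'(u,v), and for subsets A, B, C ⊆ V each of size k/3 define S(A,B,C) = W'(A,B) + W'(B,C) + W'(C,A). Then: (i) if A, B, C are pairwise disjoint, S(A,B,C) ≥ C(k,2)·Λ, where C(k,2) = k(k−1)/2; and (ii) if A, B, C are not pairwise disjoint, S(A,B,C)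 ≤ (C(k,2)−1)·(Λ + W₀) < C(k,2)·Λ. -/
open Finset

lemma two_mul_choose_two (n : ℕ) : 2 * n.choose 2 = n * (n - 1) := by
  induction n with
  | zero => rfl
  | succ n ih =>
    rw [Nat.choose_succ_succ, Nat.choose_one_right]
    cases n with
    | zero => rfl
    | succ m =>
      simp only [Nat.succ_sub_one] at *
      ring_nf
      ring_nf at ih
      omega

lemma card_lt_pairs {V : Type*} [LinearOrder V] (A : Finset V) :
    ((A ×ˢ A).filter fun p => p.1 < p.2).card = A.card.choose 2 := by
  classical
  set D := (A ×ˢ A).filter fun p => p.1 < p.2 with hD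
  set E := (A ×ˢ A).filter fun p => p.2 < p.1 with hE
  have himg : D.image Prod.swap = E := by
    ext ⟨a, b⟩
    simp only [hD, hE, mem_image, mem_filter, mem_product, Prod.exists, Prod.swap_prod_mk,
      Prod.mk.injEq]
    constructor
    · rintro ⟨x, y, ⟨⟨hx, hy⟩, hxy⟩, rfl, rfl⟩
      exact ⟨⟨hy, hx⟩, hxy⟩
    · rintro ⟨⟨ha, hb⟩, hba⟩
      exact ⟨b, a, ⟨⟨hb, ha⟩, hba⟩, rfl, rfl⟩
  have hcardE : E.card = D.card := by
    rw [← himg, card_image_of_injective _ Prod.swap_injective]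
  have hdisj : Disjoint D E := by
    rw [disjoint_left]
    rintro ⟨a, b⟩ hd he
    simp only [hD, hE, mem_filter] at hd he
    exact absurd hd.2 (not_lt_of_gt he.2)
  have hunion : D ∪ E = A.offDiag := by
    ext ⟨a, b⟩
    simp only [hD, hE, mem_union, mem_filter, mem_product, Finset.mem_offDiag]
    constructor
    · rintro (⟨⟨ha, hb⟩, h⟩ | ⟨⟨ha, hb⟩, h⟩)
      · exact ⟨ha, hb, ne_of_lt h⟩
      · exact ⟨ha, hb, ne_of_gt h⟩
    · rintro ⟨ha, hb, hne⟩
      rcases lt_or_gt_of_ne hne with h | h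
      · exact Or.inl ⟨⟨ha, hb⟩, h⟩
      · exact Or.inr ⟨⟨ha, hb⟩, h⟩
  have hoff : A.offDiag.card = A.card * A.card - A.card := Finset.offDiag_card A
  have hcards : D.card + E.card = A.card * A.card - A.card := by
    rw [← card_union_of_disjoint hdisj, hunion, hoff]
  have h2 : 2 * (A.card.choose 2) = A.card * (A.card - 1) := two_mul_choose_two A.card
  have h3 : A.card * (A.card - 1) = A.card * A.card - A.card := by
    cases A.card with
    | zero => rfl
    | succ m => simp [Nat.succ_sub_one, Nat.mul_sub, Nat.mul_succ, Nat.succ_mul]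
  set t := A.card * A.card - A.card
  omega

/-- `Wsum w' A B` is `Σ_{{u,v} ⊆ A, u ≠ v} w'(u,v) + Σ_{(u,v) ∈ A × B} w'(u,v)`, where the
first sum ranges over unordered pairs of distinct elements of `A` (represented as ordered
pairs `u < v`) and the second over all ordered pairs in `A × B`. -/
def Wsum {V : Type*} [DecidableEq V] [LinearOrder V] (w' : V → V → ℤ)
    (A B : Finset V) : ℤ :=
  (∑ u ∈ A, ∑ v ∈ A.filter (fun v => u < v), w' u v) + ∑ u ∈ A, ∑ v ∈ B, w' u v

lemma Wsum_eq {V : Type*} [DecidableEq V] [LinearOrder V] (w' : V → V → ℤ)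
    (A B : Finset V) :
    Wsum w' A B = (∑ p ∈ (A ×ˢ A).filter (fun p => p.1 < p.2), w' p.1 p.2)
      + ∑ p ∈ A ×ˢ B, w' p.1 p.2 := by
  unfold Wsum
  congr 1
  · rw [Finset.sum_filter, Finset.sum_product]
    exact Finset.sum_congr rfl fun u _ => by simp [Finset.sum_filter]
  · rw [Finset.sum_product]

lemma sum_le_card_mul {α : Type*} (s : Finset α) (f : α → ℤ) (c : ℤ)
    (h : ∀ x ∈ s, f x ≤ c) : ∑ x ∈ s, f x ≤ (s.card : ℤ) * c := by
  have := Finset.sum_le_card_nsmul s f c h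
  simpa [nsmul_eq_mul] using this

lemma card_mul_le_sum' {α : Type*} (s : Finset α) (f : α → ℤ) (c : ℤ)
    (h : ∀ x ∈ s, c ≤ f x) : (s.card : ℤ) * c ≤ ∑ x ∈ s, f x := by
  have := Finset.card_nsmul_le_sum s f c h
  simpa [nsmul_eq_mul] using this

lemma sum_le_card_mul_sub {α : Type*} [DecidableEq α] (s : Finset α) (f : α → ℤ) (c : ℤ)
    (h : ∀ x ∈ s, f x ≤ c) (x : α) (hx : x ∈ s) (hfx : f x = 0) :
    ∑ x ∈ s, f x ≤ (s.card : ℤ) * c - c := by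
  rw [← Finset.sum_erase_add s f hx, hfx, add_zero]
  have h1 : ∑ y ∈ s.erase x, f y ≤ ((s.erase x).card : ℤ) * c :=
    sum_le_card_mul _ _ _ fun y hy => h y (Finset.mem_of_mem_erase hy)
  have h2 : ((s.erase x).card : ℤ) = (s.card : ℤ) - 1 := by
    rw [Finset.card_erase_of_mem hx]
    have : 1 ≤ s.card := Finset.card_pos.mpr ⟨x, hx⟩
    push_cast [this]
    ring
  rw [h2] at h1
  linarith

/-- After adding `Λ = k² W₀` to every off-diagonal weight, every triple of pairwise disjoint
`k/3`-sets has score at least `C(k,2)·Λ`, while every non-pairwise-disjoint triple has score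
at most `(C(k,2) - 1)·(Λ + W₀) < C(k,2)·Λ`. -/
theorem stmt8 {V : Type*} [Fintype V] [LinearOrder V] (k : ℕ) (hk : 0 < k) (hk3 : 3 ∣ k)
    (W₀ : ℤ) (hW₀ : 1 ≤ W₀) (w : V → V → ℤ)
    (hsym : ∀ u v, w u v = w v u) (hdiag : ∀ u, w u u = 0)
    (hbound : ∀ u v, u ≠ v → 1 ≤ w u v ∧ w u v ≤ W₀)
    (A B C : Finset V) (hA : A.card = k / 3) (hB : B.card = k / 3) (hC : C.card = k / 3) :
    let Λ : ℤ := (k : ℤ) ^ 2 * W₀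
    let w' : V → V → ℤ := fun u v => if u = v then 0 else w u v + Λ
    let S : ℤ := Wsum w' A B + Wsum w' B C + Wsum w' C A
    ((Disjoint A B ∧ Disjoint B C ∧ Disjoint A C) →
        (k.choose 2 : ℤ) * Λ ≤ S) ∧
    (¬(Disjoint A B ∧ Disjoint B C ∧ Disjoint A C) →
        S ≤ ((k.choose 2 : ℤ) - 1) * (Λ + W₀) ∧
        ((k.choose 2 : ℤ) - 1) * (Λ + W₀) < (k.choose 2 : ℤ) * Λ) := by
  intro Λ w' S
  obtain ⟨m, rfl⟩ := hk3
  have hm : 0 < m := by omega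
  have hA' : A.card = m := by rw [hA]; omega
  have hB' : B.card = m := by rw [hB]; omega
  have hC' : C.card = m := by rw [hC]; omega
  have hmZ : (1 : ℤ) ≤ (m : ℤ) := by exact_mod_cast hm
  have hΛeq : Λ = 9 * (m : ℤ) ^ 2 * W₀ := by
    simp only [Λ]
    push_cast
    ring
  have hΛpos : 0 < Λ := by
    rw [hΛeq]
    nlinarith
  -- bounds on w'
  have hub : ∀ u v, w' u v ≤ Λ + W₀ := by
    intro u v
    simp only [w']
    by_cases h : u = v
    · rw [if_pos h]; linarith
    · rw [if_neg h]; linarith [(hbound u v h).2]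
  have hlb : ∀ u v, u ≠ v → Λ ≤ w' u v := by
    intro u v h
    simp only [w', if_neg h]
    linarith [(hbound u v h).1]
  have hw'diag : ∀ u, w' u u = 0 := by intro u; simp [w']
  -- counting identity
  set cP : ℕ := m.choose 2 with hcP
  have e2 : 1 ≤ m := hm
  have e1 : 1 ≤ 3 * m := by omega
  have h2K := two_mul_choose_two (3 * m)
  have h2c := two_mul_choose_two m
  zify [e1, e2] at h2K h2c
  have hNK : ((3 * m).choose 2 : ℤ) = 3 * (cP : ℤ) + 3 * (m : ℤ) * m := by
    have hdouble : 2 * ((3 * m).choose 2 : ℤ) = 2 * (3 * (cP : ℤ) + 3 * (m : ℤ) * m) := by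
      push_cast at h2K h2c ⊢
      linear_combination h2K - 3 * h2c
    linarith
  -- rewrite S
  have hS : S = (∑ p ∈ (A ×ˢ A).filter (fun p => p.1 < p.2), w' p.1 p.2)
      + (∑ p ∈ A ×ˢ B, w' p.1 p.2)
      + (∑ p ∈ (B ×ˢ B).filter (fun p => p.1 < p.2), w' p.1 p.2)
      + (∑ p ∈ B ×ˢ C, w' p.1 p.2)
      + (∑ p ∈ (C ×ˢ C).filter (fun p => p.1 < p.2), w' p.1 p.2)
      + (∑ p ∈ C ×ˢ A, w' p.1 p.2) := by
    simp only [S, Wsum_eq]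
    ring
  constructor
  · rintro ⟨hd1, hd2, hd3⟩
    have pb : ∀ X : Finset V, X.card = m →
        (cP : ℤ) * Λ ≤ ∑ p ∈ (X ×ˢ X).filter (fun p => p.1 < p.2), w' p.1 p.2 := by
      intro X hX
      have := card_mul_le_sum' ((X ×ˢ X).filter (fun p => p.1 < p.2))
        (fun p => w' p.1 p.2) Λ
        (fun p hp => hlb _ _ (ne_of_lt (Finset.mem_filter.mp hp).2))
      rwa [card_lt_pairs, hX] at this
    have qb : ∀ X Y : Finset V, X.card = m → Y.card = m → Disjoint X Y →
        (m : ℤ) * m * Λ ≤ ∑ p ∈ X ×ˢ Y, w' p.1 p.2 := by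
      intro X Y hX hY hd
      have := card_mul_le_sum' (X ×ˢ Y) (fun p => w' p.1 p.2) Λ ?_
      · rw [Finset.card_product, hX, hY] at this
        push_cast at this
        linarith
      · intro p hp
        rw [Finset.mem_product] at hp
        exact hlb _ _ (fun h => Finset.disjoint_left.mp hd hp.1 (h ▸ hp.2))
    rw [hS, hNK]
    have b1 := pb A hA'
    have b2 := pb B hB'
    have b3 := pb C hC'
    have b4 := qb A B hA' hB' hd1
    have b5 := qb B C hB' hC' hd2
    have b6 := qb C A hC' hA' hd3.symm
    nlinarith [hΛpos]
  · intro hnd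
    have hΛW : 0 ≤ Λ + W₀ := by linarith
    have pub : ∀ X : Finset V, X.card = m →
        ∑ p ∈ (X ×ˢ X).filter (fun p => p.1 < p.2), w' p.1 p.2 ≤ (cP : ℤ) * (Λ + W₀) := by
      intro X hX
      have := sum_le_card_mul ((X ×ˢ X).filter (fun p => p.1 < p.2))
        (fun p => w' p.1 p.2) (Λ + W₀) (fun p _ => hub _ _)
      rwa [card_lt_pairs, hX] at this
    have qub : ∀ X Y : Finset V, X.card = m → Y.card = m →
        ∑ p ∈ X ×ˢ Y, w' p.1 p.2 ≤ (m : ℤ) * m * (Λ + W₀) := by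
      intro X Y hX hY
      have := sum_le_card_mul (X ×ˢ Y) (fun p => w' p.1 p.2) (Λ + W₀) (fun p _ => hub _ _)
      rw [Finset.card_product, hX, hY] at this
      push_cast at this
      linarith
    have qub0 : ∀ X Y : Finset V, X.card = m → Y.card = m → ¬Disjoint X Y →
        ∑ p ∈ X ×ˢ Y, w' p.1 p.2 ≤ (m : ℤ) * m * (Λ + W₀) - (Λ + W₀) := by
      intro X Y hX hY hd
      obtain ⟨x, hxX, hxY⟩ := Finset.not_disjoint_iff.mp hd
      have := sum_le_card_mul_sub (X ×ˢ Y) (fun p => w' p.1 p.2) (Λ + W₀)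
        (fun p _ => hub _ _) (x, x) (Finset.mem_product.mpr ⟨hxX, hxY⟩) (hw'diag x)
      rw [Finset.card_product, hX, hY] at this
      push_cast at this
      linarith
    constructor
    · rw [hS, hNK]
      have b1 := pub A hA'
      have b2 := pub B hB'
      have b3 := pub C hC'
      by_cases hd1 : Disjoint A B
      · by_cases hd2 : Disjoint B C
        · have hd3 : ¬Disjoint A C := fun h => hnd ⟨hd1, hd2, h⟩
          have b4 := qub A B hA' hB'
          have b5 := qub B C hB' hC'
          have b6 := qub0 C A hC' hA' (fun h => hd3 h.symm)
          linarith
        · have b4 := qub A B hA' hB'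
          have b5 := qub0 B C hB' hC' hd2
          have b6 := qub C A hC' hA'
          linarith
      · have b4 := qub0 A B hA' hB' hd1
        have b5 := qub B C hB' hC'
        have b6 := qub C A hC' hA'
        linarith
    · rw [hNK, hΛeq]
      push_cast at h2c
      have h6 : 6 * (cP : ℤ) * W₀ = 3 * (m : ℤ) ^ 2 * W₀ - 3 * (m : ℤ) * W₀ := by
        linear_combination 3 * W₀ * h2c
      have p1 : (0 : ℤ) < (m : ℤ) * W₀ := mul_pos (by linarith) (by linarith)
      have p2 : (0 : ℤ) ≤ (m : ℤ) ^ 2 * W₀ := by positivity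
      linarith [h6, p1, p2, hW₀]
end

section
/- In any valid matching R between the left caterpillar F with n spine nodes and the right caterpillar G with m spine nodes, at most one pair of R consists of a spine node of F and a leaf node of G, and at most one pair of R consists of a leaf node of F and a spine node of G. -/
/-- In any valid matching, at most one pair consists of a spine node of `F` and a leaf of
`G`, and at most one pair consists of a leaf of `F` and a spine node of `G`. -/
theorem stmt12 (n m : ℕ) (hn : 1 ≤ n) (hm : 1 ≤ m)
    (R : Finset (CatNode × CatNode)) (hR : ValidMatching n m R) :
    (∀ p ∈ R, ∀ q ∈ R,
      p.1.1 = false → p.2.1 = true → q.1.1 = false → q.2.1 = true → p = q) ∧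
    (∀ p ∈ R, ∀ q ∈ R,
      p.1.1 = true → p.2.1 = false → q.1.1 = true → q.2.1 = false → p = q) := by
  obtain ⟨hbound, hinj, hanc, hpos⟩ := hR
  constructor
  · intro p hp q hq hp1 hp2 hq1 hq2
    by_contra hne
    have h1 : p.1 ≠ q.1 := (hinj p hp q hq hne).1
    have h2 : p.1.2 ≠ q.1.2 := by
      intro h; apply h1; exact Prod.ext (hp1.trans hq1.symm) h
    rcases lt_or_gt_of_ne h2 with h | h
    · have : Anc p.2 q.2 := (hanc p hp q hq).mp ⟨hp1, Or.inl ⟨hq1, h⟩⟩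
      simp [Anc, hp2] at this
    · have : Anc q.2 p.2 := (hanc q hq p hp).mp ⟨hq1, Or.inl ⟨hp1, h⟩⟩
      simp [Anc, hq2] at this
  · intro p hp q hq hp1 hp2 hq1 hq2
    by_contra hne
    have h1 : p.2 ≠ q.2 := (hinj p hp q hq hne).2
    have h2 : p.2.2 ≠ q.2.2 := by
      intro h; apply h1; exact Prod.ext (hp2.trans hq2.symm) h
    rcases lt_or_gt_of_ne h2 with h | h
    · have : Anc p.1 q.1 := (hanc p hp q hq).mpr ⟨hp2, Or.inl ⟨hq2, h⟩⟩
      simp [Anc, hp1] at this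
    · have : Anc q.1 p.1 := (hanc q hq p hp).mpr ⟨hq2, Or.inl ⟨hp2, h⟩⟩
      simp [Anc, hq1] at this
end

section
/- If (f'_a, g'_b) and (f'_{a'}, g'_{b'}) are two distinct leaf–leaf pairs of a valid matching R between the left caterpillar F and the right caterpillar G, and a < a', then b' < b; that is, the leaf–leaf pairs of any valid matching match the leaves of F to the leaves of G in reversed order of indices. -/
/-- The leaf–leaf pairs of any valid matching match the leaves of `F` to the leaves of `G`
in reversed order of indices: if `(f'_a, g'_b)` and `(f'_{a'}, g'_{b'})` are in `R` and
`a < a'`, then `b' < b`. -/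
theorem stmt13 (n m : ℕ) (hn : 1 ≤ n) (hm : 1 ≤ m)
    (R : Finset (CatNode × CatNode)) (hR : ValidMatching n m R)
    (a b a' b' : ℕ)
    (h₁ : (((true, a) : CatNode), ((true, b) : CatNode)) ∈ R)
    (h₂ : (((true, a') : CatNode), ((true, b') : CatNode)) ∈ R)
    (hlt : a < a') : b' < b := by
  obtain ⟨hbd, _, _, hpos⟩ := hR
  have ha'n : a' ≤ n := (hbd _ h₂).2.1
  have := (hpos _ h₂ _ h₁).mp (by simp [posF]; omega)
  simp [posG] at this
  omega
end

section
/- Let R be a valid matching between the left caterpillar F with n spine nodes and the right caterpillar G with m spine nodes, and suppose R contains a pair (f_a, g'_b) consisting of a spine node of F and a leaf of G, such that no other pair of R involves a node f_{a''} or f'_{a''} of F with a'' ≥ a. Then for every a' with a ≤ a' ≤ n, the set R' = (R \ {(f_a, g'_b)}) ∪ {(f_{a'}, g'_b)} is also a valid matching between F and G. -/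
/-- If `(f_a, g'_b) ∈ R` is a spine–leaf pair such that no other pair of `R` involves a node
`f_{a''}` or `f'_{a''}` of `F` with `a'' ≥ a`, then replacing `f_a` by any deeper spine node
`f_{a'}` (with `a ≤ a' ≤ n`) again yields a valid matching. -/
theorem stmt14 (n m : ℕ) (hn : 1 ≤ n) (hm : 1 ≤ m)
    (R : Finset (CatNode × CatNode)) (hR : ValidMatching n m R)
    (a b : ℕ) (hab : (((false, a) : CatNode), ((true, b) : CatNode)) ∈ R)
    (hmax : ∀ p ∈ R, p ≠ (((false, a) : CatNode), ((true, b) : CatNode)) → p.1.2 < a)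
    (a' : ℕ) (ha' : a ≤ a') (ha'n : a' ≤ n) :
    ValidMatching n m
      (insert (((false, a') : CatNode), ((true, b) : CatNode))
        (R.erase (((false, a) : CatNode), ((true, b) : CatNode)))) := by

  obtain ⟨hB, hI, hA, hP⟩ := hR
  have ha1 : 1 ≤ a := (hB _ hab).1
  have hb1 : 1 ≤ b := (hB _ hab).2.2.1
  have hbm : b ≤ m := (hB _ hab).2.2.2
  have hmem : ∀ q ∈ insert (((false, a') : CatNode), ((true, b) : CatNode))
      (R.erase (((false, a) : CatNode), ((true, b) : CatNode))),
      q = (((false, a') : CatNode), ((true, b) : CatNode)) ∨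
        (q ∈ R ∧ q ≠ (((false, a) : CatNode), ((true, b) : CatNode)) ∧ q.1.2 < a) := by
    intro q hq
    rcases Finset.mem_insert.1 hq with h | h
    · exact Or.inl h
    · exact Or.inr ⟨Finset.mem_of_mem_erase h, Finset.ne_of_mem_erase h,
        hmax _ (Finset.mem_of_mem_erase h) (Finset.ne_of_mem_erase h)⟩
  -- comparison lemmas
  have hAnc1 : ∀ u : CatNode, u.2 < a →
      (Anc ((false, a') : CatNode) u ↔ Anc ((false, a) : CatNode) u) := by
    rintro ⟨bu, cu⟩ hu
    cases bu <;> simp [Anc] <;> omega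
  have hAnc2 : ∀ u : CatNode, u.2 < a →
      (Anc u ((false, a') : CatNode) ↔ Anc u ((false, a) : CatNode)) := by
    rintro ⟨bu, cu⟩ hu
    cases bu <;> simp [Anc] <;> omega
  have hpos1 : ∀ u : CatNode, u.2 < a →
      (posF n ((false, a') : CatNode) < posF n u ↔ posF n ((false, a) : CatNode) < posF n u) := by
    rintro ⟨bu, cu⟩ hu
    cases bu <;> simp [posF] <;> omega
  have hpos2 : ∀ u : CatNode, u.2 < a →
      (posF n u < posF n ((false, a') : CatNode) ↔ posF n u < posF n ((false, a) : CatNode)) := by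
    rintro ⟨bu, cu⟩ hu
    cases bu <;> simp [posF] <;> omega
  refine ⟨?_, ?_, ?_, ?_⟩
  · intro p hp
    rcases hmem p hp with h | ⟨hpR, _, _⟩
    · subst h; exact ⟨le_trans ha1 ha', ha'n, hb1, hbm⟩
    · exact hB p hpR
  · intro p hp q hq hne
    rcases hmem p hp with hp' | ⟨hpR, hpne, hpa⟩ <;>
      rcases hmem q hq with hq' | ⟨hqR, hqne, hqa⟩
    · exact absurd (hp'.trans hq'.symm) hne
    · subst hp'
      constructor
      · intro h; have := congrArg Prod.snd h; simp at this; omega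
      · intro h; exact (hI q hqR _ hab hqne).2 h.symm
    · subst hq'
      constructor
      · intro h; have := congrArg Prod.snd h; simp at this; omega
      · intro h; exact (hI p hpR _ hab hpne).2 h
    · exact hI p hpR q hqR hne
  · intro p hp q hq
    rcases hmem p hp with hp' | ⟨hpR, hpne, hpa⟩ <;>
      rcases hmem q hq with hq' | ⟨hqR, hqne, hqa⟩
    · subst hp'; subst hq'; simp [Anc]
    · subst hp'
      exact (hAnc1 q.1 hqa).trans (hA _ hab q hqR)
    · subst hq'
      exact (hAnc2 p.1 hpa).trans (hA p hpR _ hab)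
    · exact hA p hpR q hqR
  · intro p hp q hq
    rcases hmem p hp with hp' | ⟨hpR, hpne, hpa⟩ <;>
      rcases hmem q hq with hq' | ⟨hqR, hqne, hqa⟩
    · subst hp'; subst hq'; simp
    · subst hp'
      exact (hpos1 q.1 hqa).trans (hP _ hab q hqR)
    · subst hq'
      exact (hpos2 p.1 hpa).trans (hP p hpR _ hab)
    · exact hP p hpR q hqR
end
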